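/- Let (Ω, P) be a probability space, let T : Ω → ℝ be a nonnegative random variable, let λ > 0 and p ∈ (0, 1], and let (Eᵢ)_{i≥1} be a sequence of events such that: (i) for every t > 0, the event {T > t} is contained in the intersection E₁ ∩ E₂ ∩ ⋯ ∩ E_{⌊t/λ⌋ − 1}; and (ii) P(E₁) ≤ 1 − p and, for every i ≥ 2, the conditional probability P(Eᵢ | E₁ ∩ ⋯ ∩ E_{i-1}) is at most 1 − p (with conditional probability given a null event taken to be 0). Then there exist a constant c > 0 and a time t₀ > 0 such that P(T > t) ≤ e^{−c t} for all t ≥ t₀; that is, the tail of the distribution of T has an exponential decay. -/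

import Mathlib

open MeasureTheory ProbabilityTheory

/-- Abstract exponential-tail theorem: if for every `t > 0` the event `{T > t}`
is contained in `E 1 ∩ ⋯ ∩ E (⌊t/λ⌋ - 1)`, and `P(E 1) ≤ 1 - p` as well as each
conditional probability `P(E i | E 1 ∩ ⋯ ∩ E (i-1)) ≤ 1 - p`, then the tail of
the distribution of `T` decays exponentially: `P(T > t) ≤ e^(-c t)` for some
`c > 0` and all sufficiently large `t`.  (Mathlib's `P[|A]` is the zero measure
when `P A = 0`, matching the stated convention.) -/
theorem tail_exponential_decay {Ω : Type*} [MeasurableSpace Ω]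
    (P : Measure Ω) [IsProbabilityMeasure P]
    (T : Ω → ℝ) (hT : ∀ ω, 0 ≤ T ω)
    (lam : ℝ) (hlam : 0 < lam)
    (p : ℝ) (hp0 : 0 < p) (hp1 : p ≤ 1)
    (E : ℕ → Set Ω) (hE : ∀ i, MeasurableSet (E i))
    (hsub : ∀ t : ℝ, 0 < t →
      {ω | t < T ω} ⊆ ⋂ i ∈ Finset.Icc 1 (⌊t / lam⌋ - 1).toNat, E i)
    (h1 : P (E 1) ≤ ENNReal.ofReal (1 - p))
    (hcond : ∀ i, 2 ≤ i →
      P[|⋂ j ∈ Finset.Ico 1 i, E j] (E i) ≤ ENNReal.ofReal (1 - p)) :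
    ∃ c > 0, ∃ t₀ > 0, ∀ t ≥ t₀,
      P {ω | t < T ω} ≤ ENNReal.ofReal (Real.exp (-c * t)) := by
  -- Step 1: P(⋂_{j=1}^n E j) ≤ (1-p)^n for n ≥ 1.
  have key : ∀ n : ℕ, 1 ≤ n →
      P (⋂ j ∈ Finset.Icc 1 n, E j) ≤ ENNReal.ofReal (1 - p) ^ n := by
    intro n hn
    induction n, hn using Nat.le_induction with
    | base => simpa using h1
    | succ n hn ih =>
        have hIcc : Finset.Icc 1 (n + 1) = insert (n + 1) (Finset.Icc 1 n) := by
          rw [← Finset.Ico_add_one_right_eq_Icc, @id (Finset.Ico 1 (n + 1 + 1) = insert (n + 1) (Finset.Ico 1 (n + 1)))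
              (Nat.Ico_succ_right_eq_insert_Ico (by omega)),
            Finset.Ico_add_one_right_eq_Icc]
        have hset : (⋂ j ∈ Finset.Icc 1 (n + 1), E j)
            = (⋂ j ∈ Finset.Icc 1 n, E j) ∩ E (n + 1) := by
          rw [hIcc, Finset.set_biInter_insert, Set.inter_comm]
        set A := ⋂ j ∈ Finset.Icc 1 n, E j with hA
        have hAmeas : MeasurableSet A :=
          Finset.measurableSet_biInter _ fun i _ => hE i
        have hcondn : P[|A] (E (n + 1)) ≤ ENNReal.ofReal (1 - p) := by
          have := hcond (n + 1) (by omega)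
          rwa [Finset.Ico_add_one_right_eq_Icc] at this
        have hmul : P (A ∩ E (n + 1)) = P[|A] (E (n + 1)) * P A :=
          (cond_mul_eq_inter hAmeas (E (n + 1)) P).symm
        rw [hset, hmul]
        calc P[|A] (E (n + 1)) * P A
            ≤ ENNReal.ofReal (1 - p) * ENNReal.ofReal (1 - p) ^ n :=
              mul_le_mul' hcondn ih
          _ = ENNReal.ofReal (1 - p) ^ (n + 1) := (pow_succ' _ _).symm
  -- Set up constants.
  set q : ℝ := 1 - min p (1 / 2) with hq
  have hq0 : 0 < q := by
    have : min p (1 / 2) ≤ 1 / 2 := min_le_right _ _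
    simp only [hq]; linarith
  have hq1 : q < 1 := by
    have : 0 < min p (1 / 2) := lt_min hp0 (by norm_num)
    simp only [hq]; linarith
  have hqle : 1 - p ≤ q := by
    have : min p (1 / 2) ≤ p := min_le_left _ _
    simp only [hq]; linarith
  have hL : Real.log q < 0 := Real.log_neg hq0 hq1
  refine ⟨-Real.log q / (2 * lam), div_pos (neg_pos.mpr hL) (by positivity), 4 * lam, by positivity, ?_⟩
  intro t ht
  have ht0 : 0 < t := lt_of_lt_of_le (by positivity) ht
  set n : ℕ := (⌊t / lam⌋ - 1).toNat with hn
  have hfloor : (2 : ℤ) ≤ ⌊t / lam⌋ := by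
    rw [Int.le_floor]
    push_cast
    rw [le_div_iff₀ hlam]
    linarith
  have hn1 : 1 ≤ n := by omega
  have hnreal : (t / lam - 2 : ℝ) ≤ (n : ℝ) := by
    have h1 : ((⌊t / lam⌋ : ℤ) : ℝ) ≤ t / lam := Int.floor_le _
    have h2 : t / lam - 1 < ((⌊t / lam⌋ : ℤ) : ℝ) := Int.sub_one_lt_floor _
    have : ((n : ℤ) : ℝ) = ((⌊t / lam⌋ : ℤ) : ℝ) - 1 := by
      have : (n : ℤ) = ⌊t / lam⌋ - 1 := by omega
      rw [this]; push_cast; ring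
    push_cast at this ⊢
    linarith
  calc P {ω | t < T ω} ≤ P (⋂ j ∈ Finset.Icc 1 n, E j) :=
        measure_mono (hsub t ht0)
    _ ≤ ENNReal.ofReal (1 - p) ^ n := key n hn1
    _ ≤ ENNReal.ofReal (Real.exp (-(-Real.log q / (2 * lam)) * t)) := by
        rw [← ENNReal.ofReal_pow (by linarith)]
        apply ENNReal.ofReal_le_ofReal
        have hqn : (1 - p) ^ n ≤ q ^ n := by
          apply pow_le_pow_left₀ (by linarith) hqle
        have hqexp : q ^ n = Real.exp ((n : ℝ) * Real.log q) := by
          rw [← Real.log_pow, Real.exp_log (pow_pos hq0 n)]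
        refine hqn.trans ?_
        rw [hqexp]
        apply Real.exp_le_exp.mpr
        have hmul : (n : ℝ) * Real.log q ≤ (t / lam - 2) * Real.log q :=
          mul_le_mul_of_nonpos_right hnreal (le_of_lt hL)
        refine hmul.trans ?_
        rw [show -(-Real.log q / (2 * lam)) * t = Real.log q * t / (2 * lam) by ring,
          show (t / lam - 2) * Real.log q
            = (t - 2 * lam) * Real.log q * 2 / (2 * lam) by field_simp,
          div_le_div_iff_of_pos_right (by positivity : (0:ℝ) < 2 * lam)]
        nlinarith [mul_le_mul_of_nonpos_right ht (le_of_lt hL)]
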